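/- arXiv:2002.05141 — 3 statements merged into one kernel-verified Lean document; each statement's English description precedes it below -/
import Mathlib

section
/- Let λ > 0, let p, i, T be natural numbers with p + i + 1 ≤ T, and let Z_p, Z_{p+1}, …, Z_{2T-1} be vectors in ℝ^q. For each k define the q×q matrix V̄_k = λI + Σ_{j=p}^{k} Z_j Z_jᵀ. Then Σ_{k=T}^{2T-1} Z_{k-i}ᵀ (V̄_k)⁻¹ Z_{k-i} ≤ log det(V̄_{2T-i-1} · (V̄_{T-i-1})⁻¹). -/
open Matrix Finset

/-- The regularized Gram matrix `V̄_k = λ I + ∑_{j=p}^{k} Z_j Z_jᵀ`. -/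
noncomputable def Vbar {q : ℕ} (lam : ℝ) (p : ℕ) (Z : ℕ → Fin q → ℝ) (k : ℕ) :
    Matrix (Fin q) (Fin q) ℝ :=
  lam • (1 : Matrix (Fin q) (Fin q) ℝ) + ∑ j ∈ Finset.Icc p k, vecMulVec (Z j) (Z j)

section Aux

variable {q : ℕ}

lemma vecMulVec_mulVec' (v w x : Fin q → ℝ) :
    vecMulVec v w *ᵥ x = (w ⬝ᵥ x) • v := by
  ext i
  simp [vecMulVec_apply, mulVec, dotProduct, Finset.mul_sum, mul_comm, mul_left_comm, mul_assoc]

lemma posSemidef_vecMulVec (v : Fin q → ℝ) : (vecMulVec v v).PosSemidef := by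
  rw [posSemidef_iff_dotProduct_mulVec]
  constructor
  · ext i j
    simp [vecMulVec_apply, conjTranspose_apply, mul_comm]
  · intro x
    rw [vecMulVec_mulVec']
    simp only [star_trivial, dotProduct_smul, smul_eq_mul]
    rw [show x ⬝ᵥ v = v ⬝ᵥ x from dotProduct_comm _ _]
    exact mul_self_nonneg _

lemma posSemidef_sum {s : Finset ℕ} (f : ℕ → Matrix (Fin q) (Fin q) ℝ)
    (h : ∀ j ∈ s, (f j).PosSemidef) : (∑ j ∈ s, f j).PosSemidef := by
  classical
  induction s using Finset.induction with
  | empty => simpa using Matrix.PosSemidef.zero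
  | insert _ _ hns ih =>
    rw [Finset.sum_insert hns]
    exact ((h _ (Finset.mem_insert_self _ _)).add
      (ih fun j hj => h j (Finset.mem_insert_of_mem hj)))

lemma dotProduct_self_pos' {x : Fin q → ℝ} (hx : x ≠ 0) : 0 < x ⬝ᵥ x := by
  obtain ⟨j, hj⟩ : ∃ j, x j ≠ 0 := by
    by_contra h
    push_neg at h
    exact hx (funext h)
  exact Finset.sum_pos' (fun i _ => mul_self_nonneg (x i))
    ⟨j, Finset.mem_univ j, mul_self_pos.mpr hj⟩

lemma Vbar_posDef (lam : ℝ) (hlam : 0 < lam) (p : ℕ) (Z : ℕ → Fin q → ℝ) (k : ℕ) :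
    (Vbar lam p Z k).PosDef := by
  have h1 : (lam • (1 : Matrix (Fin q) (Fin q) ℝ)).PosDef := by
    rw [posDef_iff_dotProduct_mulVec]
    constructor
    · have : ((lam • (1 : Matrix (Fin q) (Fin q) ℝ)))ᴴ
          = star lam • (1 : Matrix (Fin q) (Fin q) ℝ)ᴴ := conjTranspose_smul _ _
      rw [Matrix.IsHermitian, this, star_trivial, conjTranspose_one]
    · intro x hx
      simp only [star_trivial, smul_mulVec, one_mulVec, dotProduct_smul, smul_eq_mul]
      exact mul_pos hlam (dotProduct_self_pos' hx)
  exact h1.add_posSemidef (_root_.posSemidef_sum _ fun j _ => posSemidef_vecMulVec (Z j))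

lemma symm_of_posDef {M : Matrix (Fin q) (Fin q) ℝ} (hM : M.PosDef) : Mᵀ = M := by
  have h := hM.isHermitian
  ext i j
  have := congrFun (congrFun h i) j
  simpa [conjTranspose_apply] using this

lemma dot_mulVec_symm {M : Matrix (Fin q) (Fin q) ℝ} (hM : Mᵀ = M) (v w : Fin q → ℝ) :
    v ⬝ᵥ (M *ᵥ w) = w ⬝ᵥ (M *ᵥ v) := by
  rw [dotProduct_mulVec, ← mulVec_transpose, hM, dotProduct_comm]

/-- Monotonicity of the inverse quadratic form under the Loewner order. -/
lemma quad_inv_mono {A B : Matrix (Fin q) (Fin q) ℝ} (hA : A.PosDef) (hB : B.PosDef)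
    (hAB : (B - A).PosSemidef) (x : Fin q → ℝ) :
    x ⬝ᵥ (B⁻¹ *ᵥ x) ≤ x ⬝ᵥ (A⁻¹ *ᵥ x) := by
  classical
  have hAdet : IsUnit A.det := isUnit_iff_ne_zero.mpr hA.det_pos.ne'
  have hBdet : IsUnit B.det := isUnit_iff_ne_zero.mpr hB.det_pos.ne'
  have hAinv : (A⁻¹).PosDef := hA.inv
  have hBinv : (B⁻¹).PosDef := hB.inv
  have hBu : B *ᵥ (B⁻¹ *ᵥ x) = x := by
    rw [mulVec_mulVec, Matrix.mul_nonsing_inv _ hBdet, one_mulVec]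
  have hs0 : 0 ≤ x ⬝ᵥ (B⁻¹ *ᵥ x) := by simpa using hBinv.posSemidef.dotProduct_mulVec_nonneg x
  have hc0 : 0 ≤ x ⬝ᵥ (A⁻¹ *ᵥ x) := by simpa using hAinv.posSemidef.dotProduct_mulVec_nonneg x
  by_cases hu0 : B⁻¹ *ᵥ x = 0
  · rw [hu0]
    simpa using hc0
  · -- abbreviations as plain equalities
    set u : Fin q → ℝ := B⁻¹ *ᵥ x with hu
    have ha0 : 0 < u ⬝ᵥ (A *ᵥ u) := by simpa using hA.dotProduct_mulVec_pos hu0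
    have hAiA : A⁻¹ *ᵥ (A *ᵥ u) = u := by
      rw [mulVec_mulVec, Matrix.nonsing_inv_mul _ hAdet, one_mulVec]
    have hsymm : (A *ᵥ u) ⬝ᵥ (A⁻¹ *ᵥ x) = x ⬝ᵥ u := by
      rw [dot_mulVec_symm (symm_of_posDef hAinv), hAiA]
    have h3 : (A *ᵥ u) ⬝ᵥ u = u ⬝ᵥ (A *ᵥ u) := dotProduct_comm _ _
    -- Cauchy–Schwarz via discriminant trick
    set t : ℝ := (x ⬝ᵥ u) / (u ⬝ᵥ (A *ᵥ u)) with ht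
    have hw0 : 0 ≤ (x - t • (A *ᵥ u)) ⬝ᵥ (A⁻¹ *ᵥ (x - t • (A *ᵥ u))) := by
      simpa using hAinv.posSemidef.dotProduct_mulVec_nonneg (x - t • (A *ᵥ u))
    have hexp : (x - t • (A *ᵥ u)) ⬝ᵥ (A⁻¹ *ᵥ (x - t • (A *ᵥ u)))
        = x ⬝ᵥ (A⁻¹ *ᵥ x) - 2 * t * (x ⬝ᵥ u) + t ^ 2 * (u ⬝ᵥ (A *ᵥ u)) := by
      simp only [mulVec_sub, mulVec_smul, hAiA, sub_dotProduct, dotProduct_sub,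
        smul_dotProduct, dotProduct_smul, smul_eq_mul, hsymm, h3]
      ring
    rw [hexp] at hw0
    have key : (x ⬝ᵥ u) ^ 2 ≤ (x ⬝ᵥ (A⁻¹ *ᵥ x)) * (u ⬝ᵥ (A *ᵥ u)) := by
      have ht2 : t * (u ⬝ᵥ (A *ᵥ u)) = x ⬝ᵥ u := by
        rw [ht]; field_simp
      nlinarith [hw0, ha0, ht2]
    -- u ⬝ᵥ A u ≤ u ⬝ᵥ B u = x ⬝ᵥ u
    have hle : u ⬝ᵥ (A *ᵥ u) ≤ x ⬝ᵥ u := by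
      have h := hAB.dotProduct_mulVec_nonneg u
      simp only [star_trivial, sub_mulVec, dotProduct_sub] at h
      have hBuu : u ⬝ᵥ (B *ᵥ u) = x ⬝ᵥ u := by
        rw [hBu, dotProduct_comm]
      linarith
    nlinarith [key, hle, hc0, ha0]

lemma mul_vecMulVec' (M : Matrix (Fin q) (Fin q) ℝ) (u v : Fin q → ℝ) :
    M * vecMulVec u v = vecMulVec (M *ᵥ u) v := by
  ext i j
  simp [vecMulVec_apply, Matrix.mul_apply, mulVec, dotProduct, Finset.sum_mul, mul_assoc]

/-- Key single-step bound: `zᵀ (A + z zᵀ)⁻¹ z ≤ log det (A + z zᵀ) - log det A`. -/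
lemma step_bound {A : Matrix (Fin q) (Fin q) ℝ} (hA : A.PosDef) (z : Fin q → ℝ) :
    z ⬝ᵥ ((A + vecMulVec z z)⁻¹ *ᵥ z) ≤
      Real.log (A + vecMulVec z z).det - Real.log A.det := by
  classical
  have hAdet : IsUnit A.det := isUnit_iff_ne_zero.mpr hA.det_pos.ne'
  have hB : (A + vecMulVec z z).PosDef := hA.add_posSemidef (posSemidef_vecMulVec z)
  have hBdet : IsUnit (A + vecMulVec z z).det := isUnit_iff_ne_zero.mpr hB.det_pos.ne'
  set s : ℝ := z ⬝ᵥ (A⁻¹ *ᵥ z) with hsdef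
  have hs0 : 0 ≤ s := by simpa [hsdef] using hA.inv.posSemidef.dotProduct_mulVec_nonneg z
  have h1s : (0:ℝ) < 1 + s := by linarith
  -- B⁻¹ z = (1+s)⁻¹ • A⁻¹ z
  have hBmul : (A + vecMulVec z z) *ᵥ ((1 + s)⁻¹ • (A⁻¹ *ᵥ z)) = z := by
    rw [mulVec_smul, add_mulVec, mulVec_mulVec,
      Matrix.mul_nonsing_inv _ hAdet, one_mulVec, vecMulVec_mulVec', ← hsdef]
    ext j
    simp only [Pi.add_apply, Pi.smul_apply, smul_eq_mul]
    field_simp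
  have hBinvz : (A + vecMulVec z z)⁻¹ *ᵥ z = (1 + s)⁻¹ • (A⁻¹ *ᵥ z) := by
    have h := congrArg (fun w => (A + vecMulVec z z)⁻¹ *ᵥ w) hBmul
    simp only [mulVec_mulVec] at h
    rw [Matrix.nonsing_inv_mul _ hBdet, one_mulVec] at h
    exact h.symm
  have hquad : z ⬝ᵥ ((A + vecMulVec z z)⁻¹ *ᵥ z) = s / (1 + s) := by
    rw [hBinvz, dotProduct_smul, ← hsdef, smul_eq_mul, div_eq_inv_mul]
  -- det B = det A * (1 + s)
  have hdet : (A + vecMulVec z z).det = A.det * (1 + s) := by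
    have hfac : A + vecMulVec z z = A * (1 + vecMulVec (A⁻¹ *ᵥ z) z) := by
      rw [Matrix.mul_add, mul_one, mul_vecMulVec', mulVec_mulVec,
        Matrix.mul_nonsing_inv _ hAdet, one_mulVec]
    rw [hfac, det_mul]
    congr 1
    rw [vecMulVec_eq (Fin 1) (A⁻¹ *ᵥ z) z, Matrix.det_one_add_replicateCol_mul_replicateRow, ← hsdef]
  have hdetA : (0:ℝ) < A.det := hA.det_pos
  have hlog : Real.log (A + vecMulVec z z).det - Real.log A.det = Real.log (1 + s) := by
    rw [hdet, Real.log_mul (ne_of_gt hdetA) (ne_of_gt h1s)]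
    ring
  rw [hquad, hlog]
  -- s / (1+s) ≤ log (1+s)
  have hlb := Real.log_le_sub_one_of_pos (show (0:ℝ) < (1 + s)⁻¹ by positivity)
  rw [Real.log_inv] at hlb
  have h2 : 1 - (1 + s)⁻¹ ≤ Real.log (1 + s) := by linarith
  calc s / (1 + s) = 1 - (1 + s)⁻¹ := by field_simp; ring
    _ ≤ Real.log (1 + s) := h2

lemma Vbar_succ (lam : ℝ) (p : ℕ) (Z : ℕ → Fin q → ℝ) (k : ℕ) (hk : p ≤ k + 1) :
    Vbar lam p Z (k + 1) = Vbar lam p Z k + vecMulVec (Z (k + 1)) (Z (k + 1)) := by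
  unfold Vbar
  rw [Finset.sum_Icc_succ_top hk, add_assoc]

lemma Vbar_sub_posSemidef (lam : ℝ) (p : ℕ) (Z : ℕ → Fin q → ℝ) {k l : ℕ} (hkl : k ≤ l) :
    (Vbar lam p Z l - Vbar lam p Z k).PosSemidef := by
  unfold Vbar
  have hsub : Finset.Icc p k ⊆ Finset.Icc p l :=
    Finset.Icc_subset_Icc le_rfl hkl
  have heq : lam • (1 : Matrix (Fin q) (Fin q) ℝ) + ∑ j ∈ Finset.Icc p l, vecMulVec (Z j) (Z j)
      - (lam • (1 : Matrix (Fin q) (Fin q) ℝ) + ∑ j ∈ Finset.Icc p k, vecMulVec (Z j) (Z j))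
      = ∑ j ∈ Finset.Icc p l \ Finset.Icc p k, vecMulVec (Z j) (Z j) := by
    rw [Finset.sum_sdiff_eq_sub hsub]
    abel
  rw [heq]
  exact _root_.posSemidef_sum _ fun j _ => posSemidef_vecMulVec (Z j)

end Aux

/-- self-normalized sum bound
`∑_{k=T}^{2T-1} Z_{k-i}ᵀ V̄_k⁻¹ Z_{k-i} ≤ log det (V̄_{2T-i-1} V̄_{T-i-1}⁻¹)`. -/
theorem sum_quadform_le_logdet {q : ℕ} (lam : ℝ) (hlam : 0 < lam)
    (p i T : ℕ) (hT : p + i + 1 ≤ T) (Z : ℕ → Fin q → ℝ) :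
    ∑ k ∈ Finset.Icc T (2 * T - 1), Z (k - i) ⬝ᵥ ((Vbar lam p Z k)⁻¹ *ᵥ Z (k - i)) ≤
      Real.log ((Vbar lam p Z (2 * T - i - 1) * (Vbar lam p Z (T - i - 1))⁻¹).det) := by
  classical
  have hpd : ∀ k, (Vbar lam p Z k).PosDef := Vbar_posDef lam hlam p Z
  set f : ℕ → ℝ := fun m => Real.log (Vbar lam p Z m).det with hf
  -- pointwise bound
  have hpt : ∀ k ∈ Finset.Icc T (2 * T - 1),
      Z (k - i) ⬝ᵥ ((Vbar lam p Z k)⁻¹ *ᵥ Z (k - i)) ≤ f (k - i) - f (k - i - 1) := by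
    intro k hk
    rw [Finset.mem_Icc] at hk
    have hkT : T ≤ k := hk.1
    have hdec : Vbar lam p Z (k - i) =
        Vbar lam p Z (k - i - 1) + vecMulVec (Z (k - i)) (Z (k - i)) := by
      have h1 : k - i = (k - i - 1) + 1 := by omega
      rw [h1, Vbar_succ lam p Z _ (by omega), ← h1]
    have step1 : Z (k - i) ⬝ᵥ ((Vbar lam p Z k)⁻¹ *ᵥ Z (k - i)) ≤
        Z (k - i) ⬝ᵥ ((Vbar lam p Z (k - i))⁻¹ *ᵥ Z (k - i)) :=
      quad_inv_mono (hpd (k - i)) (hpd k)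
        (Vbar_sub_posSemidef lam p Z (by omega)) (Z (k - i))
    have step2 : Z (k - i) ⬝ᵥ ((Vbar lam p Z (k - i))⁻¹ *ᵥ Z (k - i)) ≤
        f (k - i) - f (k - i - 1) := by
      have h := step_bound (hpd (k - i - 1)) (Z (k - i))
      rw [← hdec] at h
      simpa [hf] using h
    exact step1.trans step2
  have hsum : ∑ k ∈ Finset.Icc T (2 * T - 1),
      Z (k - i) ⬝ᵥ ((Vbar lam p Z k)⁻¹ *ᵥ Z (k - i)) ≤
      ∑ k ∈ Finset.Icc T (2 * T - 1), (f (k - i) - f (k - i - 1)) :=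
    Finset.sum_le_sum hpt
  -- telescoping
  have key : ∀ n : ℕ, ∑ j ∈ Finset.range n, (f (T + j - i) - f (T + j - i - 1))
      = f (T - i - 1 + n) - f (T - i - 1) := by
    intro n
    induction n with
    | zero => simp
    | succ n ih =>
      rw [Finset.sum_range_succ, ih]
      have e2 : T + n - i - 1 = T - i - 1 + n := by omega
      rw [e2]
      have e1 : T + n - i = T - i - 1 + (n + 1) := by omega
      rw [e1]
      ring
  have htel : ∑ k ∈ Finset.Icc T (2 * T - 1), (f (k - i) - f (k - i - 1))
      = f (2 * T - i - 1) - f (T - i - 1) := by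
    have hIcc : Finset.Icc T (2 * T - 1) = Finset.Ico T (2 * T) := by
      rw [← Finset.Ico_add_one_right_eq_Icc]
      congr 1
      omega
    rw [hIcc, Finset.sum_Ico_eq_sum_range]
    have h2T : 2 * T - T = T := by omega
    rw [h2T]
    show ∑ j ∈ Finset.range T, (f (T + j - i) - f (T + j - i - 1)) = _
    rw [key T]
    have e3 : T - i - 1 + T = 2 * T - i - 1 := by omega
    rw [e3]
  -- RHS equals telescoped difference
  have hdetA : (0:ℝ) < (Vbar lam p Z (T - i - 1)).det := (hpd _).det_pos
  have hdetB : (0:ℝ) < (Vbar lam p Z (2 * T - i - 1)).det := (hpd _).det_pos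
  have hrhs : Real.log ((Vbar lam p Z (2 * T - i - 1) * (Vbar lam p Z (T - i - 1))⁻¹).det)
      = f (2 * T - i - 1) - f (T - i - 1) := by
    rw [det_mul, Matrix.det_nonsing_inv, Ring.inverse_eq_inv,
      Real.log_mul (ne_of_gt hdetB)
        (by positivity : ((Vbar lam p Z (T - i - 1)).det)⁻¹ ≠ 0), Real.log_inv]
    simp only [hf]
    ring
  rw [hrhs, ← htel]
  exact hsum
end

section
/- Let Z be a random vector in ℝ^N distributed according to the centered multivariate Gaussian measure with covariance matrix Σ, where Σ is symmetric positive semidefinite. Then for every t ≥ 0, P(ZᵀZ ≤ tr(Σ) − t) ≤ exp(−t² / (8‖Σ‖_F²)). -/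
open Matrix MeasureTheory ProbabilityTheory

/-- The positive semidefinite square root (as in the older Mathlib's `Matrix.PosSemidef.sqrt`). -/
noncomputable def Matrix.PosSemidef.sqrt {n : Type*} [Fintype n] [DecidableEq n]
    {A : Matrix n n ℝ} (hA : A.PosSemidef) : Matrix n n ℝ :=
  hA.1.eigenvectorUnitary.1 * diagonal ((↑) ∘ (√·) ∘ hA.1.eigenvalues) *
    (star hA.1.eigenvectorUnitary : Matrix n n ℝ)

/-- The law of a vector of `N` i.i.d. standard Gaussians. -/
noncomputable def stdGaussianPi (N : ℕ) : Measure (Fin N → ℝ) :=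
  Measure.pi (fun _ => gaussianReal 0 1)

/-- The centered multivariate Gaussian measure `N(0, S)` with positive semidefinite
covariance `S`, realized as the pushforward of an i.i.d. standard Gaussian vector
under multiplication by `S^{1/2}`. -/
noncomputable def multivarGaussian {N : ℕ} {S : Matrix (Fin N) (Fin N) ℝ}
    (hS : S.PosSemidef) : Measure (Fin N → ℝ) :=
  (stdGaussianPi N).map (fun x => hS.sqrt *ᵥ x)

/-! Auxiliary lemmas -/

lemma Matrix.PosSemidef.posSemidef_sqrt {n : Type*} [Fintype n] [DecidableEq n]
    {A : Matrix n n ℝ} (hA : A.PosSemidef) : hA.sqrt.PosSemidef := by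
  unfold Matrix.PosSemidef.sqrt
  have hD : (diagonal ((↑) ∘ (√·) ∘ hA.1.eigenvalues) : Matrix n n ℝ).PosSemidef := by
    refine Matrix.PosSemidef.diagonal ?_
    intro i
    simp [Real.sqrt_nonneg]
  have := hD.mul_mul_conjTranspose_same (hA.1.eigenvectorUnitary.1)
  simpa [Matrix.star_eq_conjTranspose] using this

lemma Matrix.PosSemidef.sqrt_mul_self {n : Type*} [Fintype n] [DecidableEq n]
    {A : Matrix n n ℝ} (hA : A.PosSemidef) : hA.sqrt * hA.sqrt = A := by
  unfold Matrix.PosSemidef.sqrt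
  have h := hA.1.spectral_theorem
  rw [Unitary.conjStarAlgAut_apply] at h
  have hu : (star hA.1.eigenvectorUnitary : Matrix n n ℝ) * hA.1.eigenvectorUnitary.1 = 1 :=
    Unitary.coe_star_mul_self _
  calc _ = hA.1.eigenvectorUnitary.1 * (diagonal ((↑) ∘ (√·) ∘ hA.1.eigenvalues) *
        ((star hA.1.eigenvectorUnitary : Matrix n n ℝ) * hA.1.eigenvectorUnitary.1) *
        diagonal ((↑) ∘ (√·) ∘ hA.1.eigenvalues)) *
        (star hA.1.eigenvectorUnitary : Matrix n n ℝ) := by simp only [Matrix.mul_assoc]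
    _ = A := by
      rw [hu, Matrix.mul_one, diagonal_mul_diagonal]
      conv_rhs => rw [h]
      congr 3
      funext i
      simp [Real.mul_self_sqrt (hA.eigenvalues_nonneg i)]

/-- Calculus lemma: `exp (v - v²/2) ≤ 1 + v` for `v ≥ 0`. -/
lemma aux_exp_le {v : ℝ} (hv : 0 ≤ v) : Real.exp (v - v^2/2) ≤ 1 + v := by
  have key : (1 : ℝ) ≤ (1 + v) * Real.exp (v^2/2 - v) := by
    set f : ℝ → ℝ := fun x => (1 + x) * Real.exp (x^2/2 - x) with hf
    have hder : ∀ x : ℝ, HasDerivAt f (x^2 * Real.exp (x^2/2 - x)) x := by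
      intro x
      have h1 : HasDerivAt (fun x : ℝ => x^2/2 - x) (x - 1) x := by
        have := ((hasDerivAt_pow 2 x).div_const 2).sub (hasDerivAt_id x)
        exact this.congr_deriv (by ring)
      have h2 : HasDerivAt (fun x : ℝ => Real.exp (x^2/2 - x))
          (Real.exp (x^2/2 - x) * (x - 1)) x := h1.exp
      have h3 : HasDerivAt (fun x : ℝ => 1 + x) 1 x := by
        simpa using (hasDerivAt_id x).const_add 1
      have := h3.mul h2
      exact this.congr_deriv (by ring)
    have hmono : MonotoneOn f (Set.Ici 0) := by
      apply monotoneOn_of_deriv_nonneg (convex_Ici 0)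
      · exact (Continuous.mul (by continuity) (by continuity)).continuousOn
      · intro x _
        exact (hder x).differentiableAt.differentiableWithinAt
      · intro x _
        rw [(hder x).deriv]
        positivity
    have h0 : f 0 ≤ f v := hmono (by simp) (by simpa using hv) hv
    simpa [hf] using h0
  have hexp : 0 < Real.exp (v^2/2 - v) := Real.exp_pos _
  rw [show v - v^2/2 = -(v^2/2 - v) by ring, Real.exp_neg]
  rw [inv_le_iff_one_le_mul₀ hexp]
  linarith [key]

/-- `(√(1+v))⁻¹ ≤ exp (v²/4 - v/2)` for `v ≥ 0`. -/
lemma aux_sqrt_inv_le {v : ℝ} (hv : 0 ≤ v) :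
    (Real.sqrt (1 + v))⁻¹ ≤ Real.exp (v^2/4 - v/2) := by
  have h1 : Real.exp ((v - v^2/2)/2) ≤ Real.sqrt (1 + v) := by
    rw [Real.exp_half]
    exact Real.sqrt_le_sqrt (aux_exp_le hv)
  have h2 : 0 < Real.exp ((v - v^2/2)/2) := Real.exp_pos _
  have := inv_anti₀ h2 h1
  calc (Real.sqrt (1 + v))⁻¹ ≤ (Real.exp ((v - v^2/2)/2))⁻¹ := this
    _ = Real.exp (v^2/4 - v/2) := by rw [← Real.exp_neg]; ring_nf


lemma gaussianPDFReal_zero_one (s : ℝ) :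
    gaussianPDFReal 0 1 s = (Real.sqrt (2 * Real.pi))⁻¹ * Real.exp (-(s^2/2)) := by
  simp only [gaussianPDFReal, NNReal.coe_one, mul_one, sub_zero]
  ring_nf

lemma aux_fact (a : ℝ) : ∀ s : ℝ, Real.exp (-(a * s^2)) * gaussianPDFReal 0 1 s
      = (Real.sqrt (2 * Real.pi))⁻¹ * Real.exp (-(a + 1/2) * s^2) := by
  intro s
  rw [gaussianPDFReal_zero_one, mul_comm ((Real.sqrt (2 * Real.pi))⁻¹), ← mul_assoc,
    ← Real.exp_add]
  ring_nf

lemma aux_integrable (a : ℝ) (ha : 0 ≤ a) :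
    Integrable (fun s : ℝ => Real.exp (-(a * s^2)) * gaussianPDFReal 0 1 s) := by
  simp_rw [aux_fact a]
  exact (integrable_exp_neg_mul_sq (by linarith)).const_mul _

lemma aux_integral (a : ℝ) (ha : 0 ≤ a) :
    ∫ s : ℝ, Real.exp (-(a * s^2)) * gaussianPDFReal 0 1 s
      = (Real.sqrt (1 + 2 * a))⁻¹ := by
  simp_rw [aux_fact a]
  rw [MeasureTheory.integral_const_mul, integral_gaussian]
  have hpos : (0:ℝ) < a + 1/2 := by linarith
  have hπ : (0:ℝ) < Real.pi := Real.pi_pos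
  have h2 : (0:ℝ) < 1 + 2*a := by linarith
  have key : Real.sqrt (2 * Real.pi) = Real.sqrt (Real.pi / (a + 1/2)) * Real.sqrt (1 + 2*a) := by
    rw [← Real.sqrt_mul (by positivity)]
    congr 1
    field_simp
    ring
  rw [key]
  have hs1 : (0:ℝ) < Real.sqrt (Real.pi / (a + 1/2)) := Real.sqrt_pos.mpr (by positivity)
  have hs2 : (0:ℝ) < Real.sqrt (1 + 2*a) := Real.sqrt_pos.mpr h2
  field_simp


lemma stdGaussianPi_eq_withDensity (N : ℕ) :
    stdGaussianPi N = (volume : Measure (Fin N → ℝ)).withDensity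
      (fun x => ENNReal.ofReal (∏ i, gaussianPDFReal 0 1 (x i))) := by
  rw [stdGaussianPi]
  refine Measure.pi_eq (fun s hs => ?_)
  rw [withDensity_apply _ (MeasurableSet.univ_pi hs)]
  have hind : ∀ x : Fin N → ℝ,
      (Set.univ.pi s).indicator (fun x => ENNReal.ofReal (∏ i, gaussianPDFReal 0 1 (x i))) x
        = ENNReal.ofReal (∏ i, (s i).indicator (gaussianPDFReal 0 1) (x i)) := by
    intro x
    by_cases hx : x ∈ Set.univ.pi s
    · rw [Set.indicator_of_mem hx]
      congr 1
      exact Finset.prod_congr rfl fun i _ =>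
        (Set.indicator_of_mem (hx i (Set.mem_univ i)) _).symm
    · rw [Set.indicator_of_notMem hx]
      have : ∃ i, x i ∉ s i := by
        by_contra h
        push_neg at h
        exact hx (fun i _ => h i)
      obtain ⟨i, hi⟩ := this
      rw [Finset.prod_eq_zero (Finset.mem_univ i) (Set.indicator_of_notMem hi _)]
      simp
  rw [← lintegral_indicator (MeasurableSet.univ_pi hs)]
  simp_rw [hind]
  have hint : ∀ i : Fin N, Integrable ((s i).indicator (gaussianPDFReal 0 1)) :=
    fun i => (integrable_gaussianPDFReal 0 1).indicator (hs i)
  have hprod_int : Integrable (fun x : Fin N → ℝ =>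
      ∏ i, (s i).indicator (gaussianPDFReal 0 1) (x i)) :=
    Integrable.fintype_prod_dep hint
  have hnn : 0 ≤ᵐ[volume] (fun x : Fin N → ℝ =>
      ∏ i, (s i).indicator (gaussianPDFReal 0 1) (x i)) := by
    filter_upwards with x
    exact Finset.prod_nonneg fun i _ =>
      Set.indicator_nonneg (fun y _ => gaussianPDFReal_nonneg 0 1 y) _
  rw [← ofReal_integral_eq_lintegral_ofReal hprod_int hnn]
  rw [volume_pi, integral_fintype_prod_eq_prod (fun i => (s i).indicator (gaussianPDFReal 0 1))]
  rw [ENNReal.ofReal_prod_of_nonneg (fun i _ => by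
    rw [integral_indicator (hs i)]
    exact setIntegral_nonneg (hs i) (fun y _ => gaussianPDFReal_nonneg 0 1 y))]
  refine Finset.prod_congr rfl fun i _ => ?_
  rw [integral_indicator (hs i), ← gaussianReal_apply_eq_integral 0 one_ne_zero (s i)]


lemma prod_gaussianPDFReal (N : ℕ) (y : Fin N → ℝ) :
    ∏ i, gaussianPDFReal 0 1 (y i)
      = ((Real.sqrt (2 * Real.pi))⁻¹)^N * Real.exp (-(y ⬝ᵥ y)/2) := by
  have : ∀ i, gaussianPDFReal 0 1 (y i)
      = (Real.sqrt (2 * Real.pi))⁻¹ * Real.exp (-((y i)^2/2)) := fun i => by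
    simp only [gaussianPDFReal, NNReal.coe_one, mul_one, sub_zero]
    ring_nf
  simp_rw [this, Finset.prod_mul_distrib, Finset.prod_const, Finset.card_univ,
    Fintype.card_fin, ← Real.exp_sum]
  congr 1
  simp only [dotProduct, pow_two, neg_div, Finset.sum_div, Finset.sum_neg_distrib]

lemma measurable_mulVec {N : ℕ} (M : Matrix (Fin N) (Fin N) ℝ) :
    Measurable (fun x : Fin N → ℝ => M *ᵥ x) := by
  have : (fun x : Fin N → ℝ => M *ᵥ x) = ⇑(M.mulVecLin) := by
    funext x; simp [Matrix.mulVecLin_apply]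
  rw [this]
  exact M.mulVecLin.continuous_of_finiteDimensional.measurable

lemma unitary_dotProduct {N : ℕ} {U : Matrix (Fin N) (Fin N) ℝ}
    (hU : U ∈ Matrix.unitaryGroup (Fin N) ℝ) (x : Fin N → ℝ) :
    (U *ᵥ x) ⬝ᵥ (U *ᵥ x) = x ⬝ᵥ x := by
  have hUT : Uᵀ * U = 1 := by
    have := Matrix.mem_unitaryGroup_iff'.mp hU
    rwa [Matrix.star_eq_conjTranspose, Matrix.conjTranspose_eq_transpose_of_trivial] at this
  calc (U *ᵥ x) ⬝ᵥ (U *ᵥ x) = (x ᵥ* Uᵀ) ⬝ᵥ (U *ᵥ x) := by rw [Matrix.vecMul_transpose]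
    _ = ((x ᵥ* Uᵀ) ᵥ* U) ⬝ᵥ x := by rw [Matrix.dotProduct_mulVec]
    _ = (x ᵥ* (Uᵀ * U)) ⬝ᵥ x := by rw [Matrix.vecMul_vecMul]
    _ = x ⬝ᵥ x := by rw [hUT, Matrix.vecMul_one]

lemma map_volume_unitary {N : ℕ} {U : Matrix (Fin N) (Fin N) ℝ}
    (hU : U ∈ Matrix.unitaryGroup (Fin N) ℝ) :
    Measure.map (fun x : Fin N → ℝ => U *ᵥ x) volume = volume := by
  have hdet2 : U.det * U.det = 1 := by
    have hUT : Uᵀ * U = 1 := by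
      have := Matrix.mem_unitaryGroup_iff'.mp hU
      rwa [Matrix.star_eq_conjTranspose, Matrix.conjTranspose_eq_transpose_of_trivial] at this
    have := congrArg Matrix.det hUT
    rwa [Matrix.det_mul, Matrix.det_transpose, Matrix.det_one] at this
  have habs : |U.det| = 1 := by
    rcases mul_self_eq_one_iff.mp hdet2 with h | h <;> simp [h]
  have hdet : LinearMap.det (Matrix.toLin' U) ≠ 0 := by
    rw [LinearMap.det_toLin']
    intro h
    rw [h] at habs
    simp at habs
  have hcoe : (fun x : Fin N → ℝ => U *ᵥ x) = ⇑(Matrix.toLin' U) := by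
    funext x; simp [Matrix.toLin'_apply]
  rw [hcoe, Real.map_linearMap_volume_pi_eq_smul_volume_pi hdet, LinearMap.det_toLin',
    abs_inv, habs]
  simp

lemma map_stdGaussianPi_unitary {N : ℕ} {U : Matrix (Fin N) (Fin N) ℝ}
    (hU : U ∈ Matrix.unitaryGroup (Fin N) ℝ) :
    Measure.map (fun x : Fin N → ℝ => U *ᵥ x) (stdGaussianPi N) = stdGaussianPi N := by
  have hTmeas := measurable_mulVec U
  have hfmeas : Measurable (fun x : Fin N → ℝ =>
      ENNReal.ofReal (∏ i, gaussianPDFReal 0 1 (x i))) := by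
    apply ENNReal.measurable_ofReal.comp
    exact Finset.measurable_prod _ fun i _ =>
      (measurable_gaussianPDFReal 0 1).comp (measurable_pi_apply i)
  have hinv : ∀ x : Fin N → ℝ,
      ENNReal.ofReal (∏ i, gaussianPDFReal 0 1 ((U *ᵥ x) i))
        = ENNReal.ofReal (∏ i, gaussianPDFReal 0 1 (x i)) := by
    intro x
    rw [prod_gaussianPDFReal, prod_gaussianPDFReal, unitary_dotProduct hU]
  ext E hE
  rw [Measure.map_apply hTmeas hE, stdGaussianPi_eq_withDensity,
    withDensity_apply _ (hTmeas hE), withDensity_apply _ hE]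
  calc ∫⁻ x in (fun x => U *ᵥ x) ⁻¹' E,
        ENNReal.ofReal (∏ i, gaussianPDFReal 0 1 (x i)) ∂volume
      = ∫⁻ x in (fun x => U *ᵥ x) ⁻¹' E,
        ENNReal.ofReal (∏ i, gaussianPDFReal 0 1 ((U *ᵥ x) i)) ∂volume := by
        refine setLIntegral_congr_fun (hTmeas hE) ?_
        intro x _
        exact (hinv x).symm
    _ = ∫⁻ y in E, ENNReal.ofReal (∏ i, gaussianPDFReal 0 1 (y i))
          ∂(Measure.map (fun x => U *ᵥ x) volume) :=
        (setLIntegral_map hE hfmeas hTmeas).symm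
    _ = ∫⁻ y in E, ENNReal.ofReal (∏ i, gaussianPDFReal 0 1 (y i)) ∂volume := by
        rw [map_volume_unitary hU]


instance stdGaussianPi_prob (N : ℕ) : IsProbabilityMeasure (stdGaussianPi N) := by
  unfold stdGaussianPi; infer_instance

instance multivarGaussian_prob {N : ℕ} {S : Matrix (Fin N) (Fin N) ℝ} (hS : S.PosSemidef) :
    IsProbabilityMeasure (multivarGaussian hS) := by
  unfold multivarGaussian
  exact Measure.isProbabilityMeasure_map (measurable_mulVec hS.sqrt).aemeasurable

set_option maxHeartbeats 1000000 in
/-- lower-tail bound for Gaussian quadratic forms: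
`P(ZᵀZ ≤ tr Σ - t) ≤ exp(-t²/(8‖Σ‖_F²))`. -/
theorem gaussian_quadform_lower_tail {N : ℕ} (S : Matrix (Fin N) (Fin N) ℝ)
    (hS : S.PosSemidef) (t : ℝ) (ht : 0 ≤ t) :
    multivarGaussian hS {z | z ⬝ᵥ z ≤ S.trace - t} ≤
      ENNReal.ofReal (Real.exp (- (t ^ 2 / (8 * ∑ i, ∑ j, (S i j) ^ 2)))) := by
  classical
  set V : ℝ := ∑ i, ∑ j, (S i j) ^ 2 with hVdef
  -- degenerate cases
  by_cases hdeg : t = 0 ∨ V = 0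
  · have hR : t ^ 2 / (8 * V) = 0 := by
      rcases hdeg with h | h
      · rw [h]; simp
      · rw [h]; simp
    rw [hR]
    simp only [neg_zero, Real.exp_zero, ENNReal.ofReal_one]
    exact prob_le_one
  push_neg at hdeg
  obtain ⟨ht0, hV0⟩ := hdeg
  have htpos : 0 < t := lt_of_le_of_ne ht (Ne.symm ht0)
  have hVnonneg : 0 ≤ V := Finset.sum_nonneg fun i _ =>
    Finset.sum_nonneg fun j _ => sq_nonneg _
  have hVpos : 0 < V := lt_of_le_of_ne hVnonneg (Ne.symm hV0)
  -- setup
  set A := hS.sqrt with hA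
  have hAH : Aᵀ = A := by
    have := hS.posSemidef_sqrt.1
    rwa [Matrix.IsHermitian, Matrix.conjTranspose_eq_transpose_of_trivial] at this
  have hAA : A * A = S := hS.sqrt_mul_self
  set U : Matrix (Fin N) (Fin N) ℝ := (hS.1.eigenvectorUnitary : Matrix (Fin N) (Fin N) ℝ) with hU
  have hUmem : U ∈ Matrix.unitaryGroup (Fin N) ℝ := (hS.1.eigenvectorUnitary).2
  set ev : Fin N → ℝ := hS.1.eigenvalues with hev
  have hevnn : ∀ i, 0 ≤ ev i := hS.eigenvalues_nonneg
  have hUT : Uᵀ = star U := by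
    rw [Matrix.star_eq_conjTranspose, Matrix.conjTranspose_eq_transpose_of_trivial]
  have hsUU : star U * U = 1 := Unitary.coe_star_mul_self _
  have hDiag : star U * S * U = Matrix.diagonal ev := by
    have := hS.1.conjStarAlgAut_star_eigenvectorUnitary
    rw [Unitary.conjStarAlgAut_star_apply] at this
    rwa [show (RCLike.ofReal ∘ ev : Fin N → ℝ) = ev by
      funext i; simp [RCLike.ofReal_real_eq_id]] at this
  have hspec : S = U * Matrix.diagonal ev * star U := by
    have := hS.1.spectral_theorem
    rw [Unitary.conjStarAlgAut_apply] at this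
    rwa [show (RCLike.ofReal ∘ ev : Fin N → ℝ) = ev by
      funext i; simp [RCLike.ofReal_real_eq_id]] at this
  -- trace and Frobenius identities
  have htr : S.trace = ∑ i, ev i := by
    conv_lhs => rw [hspec]
    rw [Matrix.trace_mul_cycle, hsUU, Matrix.one_mul, Matrix.trace_diagonal]
  have hVev : V = ∑ i, (ev i) ^ 2 := by
    have hsym : ∀ i j, S j i = S i j := by
      intro i j
      have := hS.1
      rw [Matrix.IsHermitian, Matrix.conjTranspose_eq_transpose_of_trivial] at this
      conv_lhs => rw [← this]
      simp [Matrix.transpose_apply]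
    have h1 : V = (S * S).trace := by
      rw [Matrix.trace, hVdef]
      refine Finset.sum_congr rfl fun i _ => ?_
      rw [Matrix.diag_apply, Matrix.mul_apply]
      exact Finset.sum_congr rfl fun j _ => by rw [hsym i j]; ring
    have h2 : S * S = U * (Matrix.diagonal ev * Matrix.diagonal ev) * star U := by
      conv_lhs => rw [hspec]
      calc (U * Matrix.diagonal ev * star U) * (U * Matrix.diagonal ev * star U)
          = U * (Matrix.diagonal ev * ((star U * U) * (Matrix.diagonal ev * star U))) := by
            simp only [Matrix.mul_assoc]
        _ = U * (Matrix.diagonal ev * Matrix.diagonal ev) * star U := by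
            rw [hsUU, Matrix.one_mul]
            simp only [Matrix.mul_assoc]
    rw [h1, h2, Matrix.trace_mul_cycle, hsUU, Matrix.one_mul,
      Matrix.diagonal_mul_diagonal, Matrix.trace_diagonal]
    exact Finset.sum_congr rfl fun i _ => by ring
  set c : ℝ := S.trace - t with hc
  -- quadratic form identities
  have hq1 : ∀ x : Fin N → ℝ, (A *ᵥ x) ⬝ᵥ (A *ᵥ x) = x ⬝ᵥ (S *ᵥ x) := by
    intro x
    have hv : x ᵥ* A = A *ᵥ x := by
      nth_rewrite 1 [← hAH]
      rw [Matrix.vecMul_transpose]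
    calc (A *ᵥ x) ⬝ᵥ (A *ᵥ x) = (x ᵥ* A) ⬝ᵥ (A *ᵥ x) := by rw [hv]
      _ = x ⬝ᵥ (A *ᵥ (A *ᵥ x)) := (Matrix.dotProduct_mulVec x A (A *ᵥ x)).symm
      _ = x ⬝ᵥ ((A * A) *ᵥ x) := by rw [Matrix.mulVec_mulVec]
      _ = x ⬝ᵥ (S *ᵥ x) := by rw [hAA]
  have hq2 : ∀ y : Fin N → ℝ, (U *ᵥ y) ⬝ᵥ (S *ᵥ (U *ᵥ y)) = ∑ i, ev i * (y i)^2 := by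
    intro y
    calc (U *ᵥ y) ⬝ᵥ (S *ᵥ (U *ᵥ y))
        = (y ᵥ* Uᵀ) ⬝ᵥ ((S * U) *ᵥ y) := by rw [Matrix.vecMul_transpose, Matrix.mulVec_mulVec]
      _ = ((y ᵥ* Uᵀ) ᵥ* (S * U)) ⬝ᵥ y := by rw [Matrix.dotProduct_mulVec]
      _ = (y ᵥ* (Uᵀ * (S * U))) ⬝ᵥ y := by rw [Matrix.vecMul_vecMul]
      _ = (y ᵥ* Matrix.diagonal ev) ⬝ᵥ y := by rw [hUT, ← Matrix.mul_assoc, hDiag]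
      _ = ∑ i, ev i * (y i)^2 := by
          simp only [dotProduct, Matrix.vecMul_diagonal]
          exact Finset.sum_congr rfl fun i _ => by ring
  -- measurability
  have hmeas1 : MeasurableSet {z : Fin N → ℝ | z ⬝ᵥ z ≤ c} := by
    apply measurableSet_le _ measurable_const
    exact Finset.measurable_sum _ fun i _ => (measurable_pi_apply i).mul (measurable_pi_apply i)
  have hmeasq : Measurable (fun x : Fin N → ℝ => x ⬝ᵥ (S *ᵥ x)) := by
    apply Finset.measurable_sum
    intro i _
    exact (measurable_pi_apply i).mul ((measurable_pi_apply i).comp (measurable_mulVec S))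
  have hmeas2 : MeasurableSet {x : Fin N → ℝ | x ⬝ᵥ (S *ᵥ x) ≤ c} :=
    measurableSet_le hmeasq measurable_const
  have hmeasQ : Measurable (fun y : Fin N → ℝ => ∑ i, ev i * (y i)^2) :=
    Finset.measurable_sum Finset.univ (fun i _ =>
      (by fun_prop :
        Measurable fun y : Fin N → ℝ => ev i * (y i)^2))
  have hmeas3 : MeasurableSet {y : Fin N → ℝ | ∑ i, ev i * (y i)^2 ≤ c} :=
    measurableSet_le hmeasQ measurable_const
  -- reduce to diagonal quadratic form
  have step1 : multivarGaussian hS {z | z ⬝ᵥ z ≤ c}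
      = stdGaussianPi N {y : Fin N → ℝ | ∑ i, ev i * (y i)^2 ≤ c} := by
    rw [multivarGaussian, Measure.map_apply (measurable_mulVec hS.sqrt) hmeas1]
    have hpre1 : (fun x : Fin N → ℝ => hS.sqrt *ᵥ x) ⁻¹' {z | z ⬝ᵥ z ≤ c}
        = {x : Fin N → ℝ | x ⬝ᵥ (S *ᵥ x) ≤ c} := by
      ext x
      simp only [Set.mem_preimage, Set.mem_setOf_eq, ← hA, hq1 x]
    rw [hpre1]
    conv_lhs => rw [← map_stdGaussianPi_unitary hUmem]
    rw [Measure.map_apply (measurable_mulVec U) hmeas2]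
    congr 1
    ext y
    simp only [Set.mem_preimage, Set.mem_setOf_eq, hq2 y]
  rw [step1]
  -- Chernoff bound
  set l : ℝ := t / (4 * V) with hl
  have hlnn : 0 ≤ l := by positivity
  have step3 : stdGaussianPi N {y : Fin N → ℝ | ∑ i, ev i * (y i)^2 ≤ c}
      ≤ ENNReal.ofReal (Real.exp (l * c) * ∏ i, (Real.sqrt (1 + 2 * (l * ev i)))⁻¹) := by
    rw [stdGaussianPi_eq_withDensity, withDensity_apply _ hmeas3, ← lintegral_indicator hmeas3]
    have hbound : ∀ y : Fin N → ℝ,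
        {y : Fin N → ℝ | ∑ i, ev i * (y i)^2 ≤ c}.indicator
          (fun x => ENNReal.ofReal (∏ i, gaussianPDFReal 0 1 (x i))) y
        ≤ ENNReal.ofReal (Real.exp (l * (c - ∑ i, ev i * (y i)^2))
            * ∏ i, gaussianPDFReal 0 1 (y i)) := by
      intro y
      by_cases hy : y ∈ {y : Fin N → ℝ | ∑ i, ev i * (y i)^2 ≤ c}
      · rw [Set.indicator_of_mem hy]
        apply ENNReal.ofReal_le_ofReal
        have h1 : (1:ℝ) ≤ Real.exp (l * (c - ∑ i, ev i * (y i)^2)) := by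
          rw [show (1:ℝ) = Real.exp 0 by simp]
          apply Real.exp_le_exp.mpr
          have hyc : ∑ i, ev i * (y i)^2 ≤ c := hy
          have hsub : 0 ≤ c - ∑ i, ev i * (y i)^2 := by linarith
          exact mul_nonneg hlnn hsub
        have hnn : 0 ≤ ∏ i, gaussianPDFReal 0 1 (y i) :=
          Finset.prod_nonneg fun i _ => gaussianPDFReal_nonneg 0 1 (y i)
        nlinarith
      · rw [Set.indicator_of_notMem hy]
        positivity
    refine le_trans (lintegral_mono hbound) ?_
    have hrw : ∀ y : Fin N → ℝ,
        Real.exp (l * (c - ∑ i, ev i * (y i)^2)) * ∏ i, gaussianPDFReal 0 1 (y i)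
        = Real.exp (l * c) * ∏ i, (Real.exp (-(l * ev i * (y i)^2)) * gaussianPDFReal 0 1 (y i)) := by
      intro y
      rw [Finset.prod_mul_distrib]
      rw [show l * (c - ∑ i, ev i * (y i)^2) = l * c + ∑ i, -(l * ev i * (y i)^2) by
        rw [Finset.sum_neg_distrib]
        rw [show (∑ i, l * ev i * (y i)^2) = l * ∑ i, ev i * (y i)^2 by
          rw [Finset.mul_sum]; exact Finset.sum_congr rfl fun i _ => by ring]
        ring]
      rw [Real.exp_add, Real.exp_sum]
      ring
    simp_rw [hrw]
    have hint_i : ∀ i : Fin N,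
        Integrable (fun s : ℝ => Real.exp (-(l * ev i * s^2)) * gaussianPDFReal 0 1 s) :=
      fun i => aux_integrable _ (mul_nonneg hlnn (hevnn i))
    have hint : Integrable (fun y : Fin N → ℝ =>
        Real.exp (l * c) * ∏ i, (Real.exp (-(l * ev i * (y i)^2)) * gaussianPDFReal 0 1 (y i))) := by
      have := Integrable.fintype_prod_dep (E := fun _ : Fin N => ℝ)
        (f := fun i s => Real.exp (-(l * ev i * s^2)) * gaussianPDFReal 0 1 s) hint_i
      exact this.const_mul _
    have hnn : 0 ≤ᵐ[volume] (fun y : Fin N → ℝ =>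
        Real.exp (l * c) * ∏ i, (Real.exp (-(l * ev i * (y i)^2)) * gaussianPDFReal 0 1 (y i))) := by
      filter_upwards with y
      have : 0 ≤ ∏ i, (Real.exp (-(l * ev i * (y i)^2)) * gaussianPDFReal 0 1 (y i)) :=
        Finset.prod_nonneg fun i _ =>
          mul_nonneg (Real.exp_nonneg _) (gaussianPDFReal_nonneg 0 1 (y i))
      positivity
    rw [← ofReal_integral_eq_lintegral_ofReal hint hnn]
    apply ENNReal.ofReal_le_ofReal
    rw [MeasureTheory.integral_const_mul]
    rw [volume_pi, integral_fintype_prod_eq_prod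
      (fun i (s : ℝ) => Real.exp (-(l * ev i * s^2)) * gaussianPDFReal 0 1 s)]
    apply le_of_eq
    congr 1
    exact Finset.prod_congr rfl fun i _ => aux_integral _ (mul_nonneg hlnn (hevnn i))
  refine le_trans step3 (ENNReal.ofReal_le_ofReal ?_)
  -- final real inequality
  have hprod : ∏ i, (Real.sqrt (1 + 2 * (l * ev i)))⁻¹
      ≤ ∏ i, Real.exp ((2 * (l * ev i))^2/4 - (2 * (l * ev i))/2) := by
    apply Finset.prod_le_prod
    · intro i _
      positivity
    · intro i _
      exact aux_sqrt_inv_le (by nlinarith [mul_nonneg hlnn (hevnn i)])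
  have hsum : ∏ i, Real.exp ((2 * (l * ev i))^2/4 - (2 * (l * ev i))/2)
      = Real.exp (l^2 * V - l * S.trace) := by
    rw [← Real.exp_sum]
    congr 1
    rw [htr, hVev, Finset.mul_sum, Finset.mul_sum, ← Finset.sum_sub_distrib]
    exact Finset.sum_congr rfl fun i _ => by ring
  calc Real.exp (l * c) * ∏ i, (Real.sqrt (1 + 2 * (l * ev i)))⁻¹
      ≤ Real.exp (l * c) * Real.exp (l^2 * V - l * S.trace) := by
        rw [← hsum]
        exact mul_le_mul_of_nonneg_left hprod (Real.exp_nonneg _)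
    _ = Real.exp (l * c + (l^2 * V - l * S.trace)) := (Real.exp_add _ _).symm
    _ ≤ Real.exp (-(t^2/(8*V))) := by
        apply Real.exp_le_exp.mpr
        have h8 : (0:ℝ) < 8 * V := by linarith
        have h16 : (0:ℝ) < 16 * V := by linarith
        have hL : l * c + (l^2 * V - l * S.trace) = -(3 * t^2/(16*V)) := by
          rw [hc, hl]; field_simp; ring
        rw [hL]
        apply neg_le_neg
        rw [div_le_div_iff₀ h8 h16]
        nlinarith [sq_nonneg t]
end

section
/- Let A ∈ ℝ^{n×n}, C ∈ ℝ^{m×n}, K ∈ ℝ^{n×m}, and let a(s) = s^d − a_{d−1}s^{d−1} − ⋯ − a₀ be the minimal polynomial of A, of degree d. Let (e_k)_{k≥0} be any sequence of vectors in ℝ^m, define x̂_{k+1} = A x̂_k + K e_k and y_k = C x̂_k + e_k, and fix a past horizon p ≥ 1. Define the stacked past-output vectors Z_k = (y_{k−p}ᵀ, …, y_{k−1}ᵀ)ᵀ ∈ ℝ^{mp} for k ≥ p. Then for every k ≥ p + d there exists δ_k ∈ ℝ^{mp} such that Z_k = a_{d−1} Z_{k−1} + ⋯ + a₀ Z_{k−d}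 + δ_k and ‖δ_k‖₂ ≤ Δ · sup_{i ≤ k−1} ‖e_i‖₂, where Δ = (d+1) ‖a‖₁ · max{ ‖C‖₂‖K‖₂ · max_{0 ≤ t ≤ d−1} ‖A^t‖₂, 1 } · √p. -/
open Matrix Finset Polynomial

/-- The spectral (ℓ₂ operator) norm of a real matrix. -/
noncomputable def specNorm {α β : Type*} [Fintype α] [Fintype β] [DecidableEq β]
    (A : Matrix α β ℝ) : ℝ :=
  ‖LinearMap.toContinuousLinearMap (Matrix.toEuclideanLin A)‖

/-- Euclidean norm of a finitely supported real vector. -/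
noncomputable def evnorm {α : Type*} [Fintype α] (x : α → ℝ) : ℝ :=
  Real.sqrt (∑ i, (x i) ^ 2)

/-- The stacked vector of the `p` past outputs
`Z_k = (y_{k-p}ᵀ, …, y_{k-1}ᵀ)ᵀ ∈ ℝ^{mp}` (block `i` is `y_{k-p+i}`, `0 ≤ i < p`). -/
def pastZ {m : ℕ} (p : ℕ) (y : ℕ → Fin m → ℝ) (k : ℕ) : Fin p × Fin m → ℝ :=
  fun ir => y (k - p + ir.1) ir.2

lemma evnorm_eq_norm {α : Type*} [Fintype α] (x : α → ℝ) :
    evnorm x = ‖(WithLp.equiv 2 (α → ℝ)).symm x‖ := by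
  rw [evnorm, EuclideanSpace.norm_eq]
  simp [Real.norm_eq_abs, sq_abs]

lemma evnorm_nonneg {α : Type*} [Fintype α] (x : α → ℝ) : 0 ≤ evnorm x :=
  Real.sqrt_nonneg _

lemma evnorm_add_le {α : Type*} [Fintype α] (x z : α → ℝ) :
    evnorm (x + z) ≤ evnorm x + evnorm z := by
  simp only [evnorm_eq_norm, WithLp.equiv_symm_apply, WithLp.toLp_add]
  exact norm_add_le _ _

lemma evnorm_sub_le {α : Type*} [Fintype α] (x z : α → ℝ) :
    evnorm (x - z) ≤ evnorm x + evnorm z := by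
  simp only [evnorm_eq_norm, WithLp.equiv_symm_apply, WithLp.toLp_sub]
  exact norm_sub_le _ _

lemma evnorm_smul {α : Type*} [Fintype α] (c : ℝ) (x : α → ℝ) :
    evnorm (c • x) = |c| * evnorm x := by
  simp only [evnorm_eq_norm, WithLp.equiv_symm_apply, WithLp.toLp_smul]
  rw [norm_smul, Real.norm_eq_abs]

lemma evnorm_sum_le {α ι : Type*} [Fintype α] (s : Finset ι) (f : ι → α → ℝ) :
    evnorm (∑ i ∈ s, f i) ≤ ∑ i ∈ s, evnorm (f i) := by
  classical
  simp only [evnorm_eq_norm]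
  rw [show (WithLp.equiv 2 (α → ℝ)).symm (∑ i ∈ s, f i)
      = ∑ i ∈ s, (WithLp.equiv 2 (α → ℝ)).symm (f i) by
    induction s using Finset.induction with
    | empty => simp [WithLp.equiv_symm_apply, WithLp.toLp_zero]
    | insert _ _ h ih => simp [Finset.sum_insert h, WithLp.equiv_symm_apply, WithLp.toLp_add, ih]]
  exact norm_sum_le _ _

lemma evnorm_mulVec_le {α β : Type*} [Fintype α] [Fintype β] [DecidableEq β]
    (M : Matrix α β ℝ) (v : β → ℝ) :
    evnorm (M *ᵥ v) ≤ specNorm M * evnorm v := by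
  rw [evnorm_eq_norm, evnorm_eq_norm, WithLp.equiv_symm_apply, ← Matrix.toEuclideanLin_apply_piLp_toLp]
  exact (LinearMap.toContinuousLinearMap (Matrix.toEuclideanLin M)).le_opNorm _

lemma specNorm_nonneg {α β : Type*} [Fintype α] [Fintype β] [DecidableEq β]
    (M : Matrix α β ℝ) : 0 ≤ specNorm M := norm_nonneg _

lemma sum_Icc_reflect {M : Type*} [AddCommMonoid M] (d : ℕ) (f : ℕ → M) :
    ∑ t ∈ Finset.Icc 1 d, f (d - t) = ∑ i ∈ Finset.range d, f i := by
  apply Finset.sum_nbij' (fun t => d - t) (fun i => d - i) <;>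
    simp +contextual [Finset.mem_Icc, Finset.mem_range] <;> omega

lemma evnorm_blocks {p m : ℕ} (δ : Fin p × Fin m → ℝ) (c : ℝ) (hc : 0 ≤ c)
    (h : ∀ i : Fin p, evnorm (fun r => δ (i, r)) ≤ c) :
    evnorm δ ≤ Real.sqrt p * c := by
  rw [evnorm, Fintype.sum_prod_type]
  have hstep : ∀ i : Fin p, ∑ r, δ (i, r) ^ 2 ≤ c ^ 2 := by
    intro i
    have h2 : Real.sqrt (∑ r, δ (i, r) ^ 2) ≤ c := h i
    calc ∑ r, δ (i, r) ^ 2 = Real.sqrt (∑ r, δ (i, r) ^ 2) ^ 2 := by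
          rw [Real.sq_sqrt (by positivity)]
      _ ≤ c ^ 2 := by nlinarith [Real.sqrt_nonneg (∑ r, δ (i, r) ^ 2)]
  calc Real.sqrt (∑ i, ∑ r, δ (i, r) ^ 2) ≤ Real.sqrt (∑ _i : Fin p, c ^ 2) :=
        Real.sqrt_le_sqrt (Finset.sum_le_sum fun i _ => hstep i)
    _ = Real.sqrt p * c := by
        rw [Finset.sum_const, Finset.card_univ, Fintype.card_fin, nsmul_eq_mul,
          Real.sqrt_mul (by positivity), Real.sqrt_sq hc]

lemma mulVec_sum' {α β ι : Type*} [Fintype α] [Fintype β] (M : Matrix α β ℝ)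
    (s : Finset ι) (v : ι → β → ℝ) :
    M *ᵥ (∑ i ∈ s, v i) = ∑ i ∈ s, M *ᵥ v i := by
  classical
  induction s using Finset.induction with
  | empty => simp [Matrix.mulVec_zero]
  | insert _ _ h ih => simp [Finset.sum_insert h, Matrix.mulVec_add, ih]

lemma sum_mulVec' {α β ι : Type*} [Fintype α] [Fintype β] (s : Finset ι)
    (M : ι → Matrix α β ℝ) (v : β → ℝ) :
    (∑ i ∈ s, M i) *ᵥ v = ∑ i ∈ s, M i *ᵥ v := by
  classical
  induction s using Finset.induction with
  | empty => simp [Matrix.zero_mulVec]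
  | insert _ _ h ih => simp [Finset.sum_insert h, Matrix.add_mulVec, ih]

/-- The accumulated input term in the state recursion. -/
noncomputable def Ssum {n m : ℕ} (A : Matrix (Fin n) (Fin n) ℝ)
    (K : Matrix (Fin n) (Fin m) ℝ) (e : ℕ → Fin m → ℝ) (t' j' : ℕ) : Fin n → ℝ :=
  ∑ s ∈ Finset.range t', (A ^ s) *ᵥ (K *ᵥ e (j' - 1 - s))

lemma xh_rec {n m : ℕ} (A : Matrix (Fin n) (Fin n) ℝ) (K : Matrix (Fin n) (Fin m) ℝ)
    (e : ℕ → Fin m → ℝ) (xh : ℕ → Fin n → ℝ)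
    (hx : ∀ k, xh (k + 1) = A *ᵥ xh k + K *ᵥ e k) :
    ∀ t j, t ≤ j → xh j = (A ^ t) *ᵥ xh (j - t) + Ssum A K e t j := by
  intro t
  induction t with
  | zero => intro j _; simp [Ssum]
  | succ t ih =>
    intro j hj
    have hstep : xh (j - t) = A *ᵥ xh (j - t - 1) + K *ᵥ e (j - t - 1) := by
      have := hx (j - t - 1)
      rwa [show j - t - 1 + 1 = j - t by omega] at this
    rw [ih j (by omega), hstep, Ssum, Ssum, Finset.sum_range_succ, Matrix.mulVec_add,
      Matrix.mulVec_mulVec, ← pow_succ,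
      show j - t - 1 = j - (t + 1) by omega, show j - 1 - t = j - (t + 1) by omega]
    abel

lemma minpoly_pow {n d : ℕ} (A : Matrix (Fin n) (Fin n) ℝ) (a : ℕ → ℝ)
    (hmin : minpoly ℝ A =
      X ^ d - ∑ i ∈ Finset.range d, Polynomial.C (a i) * X ^ i) :
    A ^ d = ∑ i ∈ Finset.range d, a i • A ^ i := by
  have h0 := minpoly.aeval ℝ A
  rw [hmin] at h0
  simp only [map_sub, map_pow, aeval_X, map_sum, _root_.map_mul, aeval_C, sub_eq_zero] at h0
  rw [h0]
  refine Finset.sum_congr rfl fun i _ => ?_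
  rw [Algebra.smul_def]

/-- ARMA-like representation of the stacked past outputs: for every
`k ≥ p + d` there is `δ_k` with `Z_k = ∑_{t=1}^d a_{d-t} Z_{k-t} + δ_k` and
`‖δ_k‖₂ ≤ Δ sup_{i ≤ k-1} ‖e_i‖₂`,
where `Δ = (d+1) ‖a‖₁ max(‖C‖‖K‖ max_{0 ≤ t ≤ d-1} ‖A^t‖, 1) √p`. -/
theorem pastZ_arma_representation {n m d p : ℕ} (hd : 0 < d) (hp : 0 < p)
    (A : Matrix (Fin n) (Fin n) ℝ) (C : Matrix (Fin m) (Fin n) ℝ)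
    (K : Matrix (Fin n) (Fin m) ℝ) (a : ℕ → ℝ)
    (hmin : minpoly ℝ A =
      X ^ d - ∑ i ∈ Finset.range d, Polynomial.C (a i) * X ^ i)
    (e : ℕ → Fin m → ℝ) (xh : ℕ → Fin n → ℝ) (y : ℕ → Fin m → ℝ)
    (hx : ∀ k, xh (k + 1) = A *ᵥ xh k + K *ᵥ e k)
    (hy : ∀ k, y k = C *ᵥ xh k + e k) :
    ∀ k, ∀ hk : p + d ≤ k, ∃ δk : Fin p × Fin m → ℝ,
      pastZ p y k = (∑ t ∈ Finset.Icc 1 d, a (d - t) • pastZ p y (k - t)) + δk ∧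
      evnorm δk ≤
        ((d + 1 : ℝ) * (1 + ∑ i ∈ Finset.range d, |a i|) *
            max (specNorm C * specNorm K *
              (Finset.range d).sup' (Finset.nonempty_range_iff.mpr hd.ne')
                (fun t => specNorm (A ^ t))) 1 * Real.sqrt p) *
          (Finset.range k).sup' (Finset.nonempty_range_iff.mpr (by omega))
            (fun i => evnorm (e i)) := by
  intro k hk
  classical
  have hk0 : 0 < k := by omega
  refine ⟨pastZ p y k - ∑ t ∈ Finset.Icc 1 d, a (d - t) • pastZ p y (k - t),
    by abel, ?_⟩
  set δk := pastZ p y k - ∑ t ∈ Finset.Icc 1 d, a (d - t) • pastZ p y (k - t) with hδ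
  set E := (Finset.range k).sup' (Finset.nonempty_range_iff.mpr hk0.ne')
    (fun i => evnorm (e i)) with hE
  have hEi : ∀ i, i < k → evnorm (e i) ≤ E := by
    intro i hi; rw [hE]; exact Finset.le_sup' (fun i => evnorm (e i)) (Finset.mem_range.mpr hi)
  have hE0 : 0 ≤ E := le_trans (evnorm_nonneg (e 0)) (hEi 0 hk0)
  set M := (Finset.range d).sup' (Finset.nonempty_range_iff.mpr hd.ne')
    (fun t => specNorm (A ^ t)) with hM
  have hMt : ∀ t, t < d → specNorm (A ^ t) ≤ M := by
    intro t ht; rw [hM]; exact Finset.le_sup' (fun t => specNorm (A ^ t)) (Finset.mem_range.mpr ht)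
  set B := max (specNorm C * specNorm K * M) 1 with hB
  have hB1 : (1:ℝ) ≤ B := le_max_right _ _
  have hB0 : (0:ℝ) ≤ B := le_trans zero_le_one hB1
  have hBE : (0:ℝ) ≤ B * E := mul_nonneg hB0 hE0
  set Sa := ∑ i ∈ Finset.range d, |a i| with hSa
  have hSa0 : (0:ℝ) ≤ Sa := Finset.sum_nonneg fun i _ => abs_nonneg _
  have hAmix : A ^ d = ∑ t ∈ Finset.Icc 1 d, a (d - t) • A ^ (d - t) := by
    rw [minpoly_pow A a hmin, ← sum_Icc_reflect d (fun i => a i • A ^ i)]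
  -- bound on C *ᵥ Ssum
  have hCS : ∀ t' j', t' ≤ d → j' < k →
      evnorm (C *ᵥ Ssum A K e t' j') ≤ t' * (B * E) := by
    intro t' j' ht' hj'
    have h1 : evnorm (Ssum A K e t' j') ≤
        ∑ s ∈ Finset.range t', specNorm (A ^ s) * (specNorm K * E) := by
      refine le_trans (evnorm_sum_le _ _) (Finset.sum_le_sum fun s hs => ?_)
      refine le_trans (evnorm_mulVec_le _ _) ?_
      refine mul_le_mul_of_nonneg_left ?_ (specNorm_nonneg _)
      refine le_trans (evnorm_mulVec_le _ _) ?_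
      exact mul_le_mul_of_nonneg_left (hEi _ (by omega)) (specNorm_nonneg _)
    calc evnorm (C *ᵥ Ssum A K e t' j')
        ≤ specNorm C * evnorm (Ssum A K e t' j') := evnorm_mulVec_le _ _
      _ ≤ specNorm C * ∑ s ∈ Finset.range t', specNorm (A ^ s) * (specNorm K * E) :=
          mul_le_mul_of_nonneg_left h1 (specNorm_nonneg _)
      _ = ∑ s ∈ Finset.range t', specNorm C * specNorm K * specNorm (A ^ s) * E := by
          rw [Finset.mul_sum]; exact Finset.sum_congr rfl fun s _ => by ring
      _ ≤ ∑ _s ∈ Finset.range t', B * E := by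
          refine Finset.sum_le_sum fun s hs => ?_
          have hsd : s < d := lt_of_lt_of_le (Finset.mem_range.mp hs) ht'
          have h2 : specNorm C * specNorm K * specNorm (A ^ s) ≤ B :=
            le_trans (mul_le_mul_of_nonneg_left (hMt s hsd)
              (mul_nonneg (specNorm_nonneg C) (specNorm_nonneg K))) (le_max_left _ _)
          exact mul_le_mul_of_nonneg_right h2 hE0
      _ = t' * (B * E) := by rw [Finset.sum_const, Finset.card_range]; ring
  -- per-block bound
  have hblock : ∀ i : Fin p, evnorm (fun r => δk (i, r)) ≤
      ((d:ℝ) + 1) * (1 + Sa) * B * E := by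
    intro i
    have hip : (i : ℕ) < p := i.2
    set j := k - p + (i : ℕ) with hj
    have hjd : d ≤ j := by omega
    have hjk : j < k := by omega
    -- block identity
    have h1 : (fun r => δk (i, r)) =
        y j - ∑ t ∈ Finset.Icc 1 d, a (d - t) • y (j - t) := by
      funext r
      have hidx : ∀ t ∈ Finset.Icc 1 d,
          a (d - t) * pastZ p y (k - t) (i, r) = a (d - t) * y (j - t) r := by
        intro t ht
        rw [Finset.mem_Icc] at ht
        show a (d - t) * y (k - t - p + (i:ℕ)) r = _
        rw [show k - t - p + (i:ℕ) = j - t by omega]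
      simp only [hδ, Pi.sub_apply, Finset.sum_apply, Pi.smul_apply, smul_eq_mul]
      rw [Finset.sum_congr rfl hidx]
      rfl
    have hxj : xh j = (A ^ d) *ᵥ xh (j - d) + Ssum A K e d j :=
      xh_rec A K e xh hx d j hjd
    have hxjt : ∀ t ∈ Finset.Icc 1 d, xh (j - t) =
        (A ^ (d - t)) *ᵥ xh (j - d) + Ssum A K e (d - t) (j - t) := by
      intro t ht
      rw [Finset.mem_Icc] at ht
      have := xh_rec A K e xh hx (d - t) (j - t) (by omega)
      rwa [show j - t - (d - t) = j - d by omega] at this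
    have hkey : C *ᵥ ((A ^ d) *ᵥ xh (j - d)) =
        ∑ t ∈ Finset.Icc 1 d, a (d - t) • (C *ᵥ ((A ^ (d - t)) *ᵥ xh (j - d))) := by
      conv_lhs => rw [hAmix]
      rw [sum_mulVec', mulVec_sum']
      refine Finset.sum_congr rfl fun t ht => ?_
      rw [Matrix.smul_mulVec, Matrix.mulVec_smul]
    have h2 : ∑ t ∈ Finset.Icc 1 d, a (d - t) • y (j - t)
        = ∑ t ∈ Finset.Icc 1 d, a (d - t) •
            (C *ᵥ ((A ^ (d - t)) *ᵥ xh (j - d) + Ssum A K e (d - t) (j - t)) + e (j - t)) :=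
      Finset.sum_congr rfl fun t ht => by rw [hy (j - t), hxjt t ht]
    have hbl : (fun r => δk (i, r)) =
        (C *ᵥ Ssum A K e d j
          - ∑ t ∈ Finset.Icc 1 d, a (d - t) • (C *ᵥ Ssum A K e (d - t) (j - t)))
        + (e j - ∑ t ∈ Finset.Icc 1 d, a (d - t) • e (j - t)) := by
      rw [h1, hy j, hxj, h2]
      simp only [Matrix.mulVec_add, smul_add, Finset.sum_add_distrib]
      rw [hkey]
      abel
    rw [hbl]
    have hterm1 : evnorm (C *ᵥ Ssum A K e d j) ≤ d * (B * E) := hCS d j le_rfl hjk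
    have hsum1 : evnorm (∑ t ∈ Finset.Icc 1 d,
        a (d - t) • (C *ᵥ Ssum A K e (d - t) (j - t))) ≤ Sa * ((d:ℝ) * (B * E)) := by
      refine le_trans (evnorm_sum_le _ _) ?_
      have hb : ∀ t ∈ Finset.Icc 1 d,
          evnorm (a (d - t) • (C *ᵥ Ssum A K e (d - t) (j - t)))
            ≤ |a (d - t)| * ((d:ℝ) * (B * E)) := by
        intro t ht
        rw [Finset.mem_Icc] at ht
        rw [evnorm_smul]
        refine mul_le_mul_of_nonneg_left ?_ (abs_nonneg _)
        refine le_trans (hCS (d - t) (j - t) (by omega) (by omega)) ?_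
        have hcast : ((d - t : ℕ) : ℝ) ≤ (d : ℝ) := Nat.cast_le.mpr (Nat.sub_le d t)
        exact mul_le_mul_of_nonneg_right hcast hBE
      refine le_trans (Finset.sum_le_sum hb) ?_
      rw [← Finset.sum_mul, sum_Icc_reflect d (fun i => |a i|), ← hSa]
    have hterm2 : evnorm (e j) ≤ E := hEi j hjk
    have hsum2 : evnorm (∑ t ∈ Finset.Icc 1 d, a (d - t) • e (j - t)) ≤ Sa * E := by
      refine le_trans (evnorm_sum_le _ _) ?_
      have hb : ∀ t ∈ Finset.Icc 1 d,
          evnorm (a (d - t) • e (j - t)) ≤ |a (d - t)| * E := by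
        intro t ht
        rw [Finset.mem_Icc] at ht
        rw [evnorm_smul]
        exact mul_le_mul_of_nonneg_left (hEi (j - t) (by omega)) (abs_nonneg _)
      refine le_trans (Finset.sum_le_sum hb) ?_
      rw [← Finset.sum_mul, sum_Icc_reflect d (fun i => |a i|), ← hSa]
    calc evnorm ((C *ᵥ Ssum A K e d j
          - ∑ t ∈ Finset.Icc 1 d, a (d - t) • (C *ᵥ Ssum A K e (d - t) (j - t)))
        + (e j - ∑ t ∈ Finset.Icc 1 d, a (d - t) • e (j - t)))
        ≤ ((d:ℝ) * (B * E) + Sa * ((d:ℝ) * (B * E))) + (E + Sa * E) := by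
          refine le_trans (evnorm_add_le _ _) (add_le_add ?_ ?_)
          · exact le_trans (evnorm_sub_le _ _) (add_le_add hterm1 hsum1)
          · exact le_trans (evnorm_sub_le _ _) (add_le_add hterm2 hsum2)
      _ ≤ ((d:ℝ) + 1) * (1 + Sa) * B * E := by
          nlinarith [mul_nonneg (mul_nonneg (by linarith : (0:ℝ) ≤ 1 + Sa) hE0)
            (by linarith : (0:ℝ) ≤ B - 1), Nat.cast_nonneg (α := ℝ) d, hBE, hSa0, hE0]
  have hc0 : (0:ℝ) ≤ ((d:ℝ) + 1) * (1 + Sa) * B * E :=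
    mul_nonneg (mul_nonneg (mul_nonneg (by positivity) (by linarith)) hB0) hE0
  calc evnorm δk ≤ Real.sqrt p * (((d:ℝ) + 1) * (1 + Sa) * B * E) :=
        evnorm_blocks δk _ hc0 hblock
    _ = (((d:ℝ) + 1) * (1 + Sa) * B * Real.sqrt p) * E := by ring
end
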